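/- arXiv:1707.01084 — 2 statements merged into one kernel-verified Lean document; each statement's English description precedes it below -/
import Mathlib

section
/- For every d > 0 there exist g ∈ L²(ℝ) and a uniformly discrete set Λ ⊂ ℝ² with upper Beurling density D⁺(Λ) > d such that the Gabor system G(g,Λ) is minimal in L²(ℝ). -/
open MeasureTheory Complex Filter
open scoped ENNReal

noncomputable section

/-- The Hilbert space `L²(ℝ)` of complex square-integrable functions. -/
abbrev SpaceL2 := Lp ℂ 2 (volume : Measure ℝ)

/-- The cube `Q_{(a,b)}(R)` with center `c = (a,b)` and side length `2R`. -/
def cube (c : ℝ × ℝ) (R : ℝ) : Set (ℝ × ℝ) :=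
  {p | |p.1 - c.1| ≤ R ∧ |p.2 - c.2| ≤ R}

/-- `Λ` is uniformly discrete with separation constant `δ`. -/
def UniformlyDiscreteWith (δ : ℝ) (Λ : Set (ℝ × ℝ)) : Prop :=
  ∀ x ∈ Λ, ∀ y ∈ Λ, x ≠ y → δ < dist x y

/-- `Λ` is uniformly discrete. -/
def UniformlyDiscrete (Λ : Set (ℝ × ℝ)) : Prop :=
  ∃ δ > 0, UniformlyDiscreteWith δ Λ

/-- The time-frequency shift `t ↦ e^{2πiμt} g(t - λ)` of `g` along `p = (λ, μ)`. -/
def gaborFn (g : ℝ → ℂ) (p : ℝ × ℝ) : ℝ → ℂ :=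
  fun t => Complex.exp (2 * Real.pi * Complex.I * p.2 * t) * g (t - p.1)

/-- The upper Beurling density
`D⁺(Λ) = lim_{R→∞} max_{(a,b)} |Λ ∩ Q_{(a,b)}(R)| / (2R)²` (as a `limsup`). -/
def upperDensity (Λ : Set (ℝ × ℝ)) : ℝ≥0∞ :=
  Filter.limsup
    (fun R : ℝ =>
      (⨆ c : ℝ × ℝ, ((Λ ∩ cube c R).ncard : ℝ≥0∞)) / ENNReal.ofReal ((2 * R) ^ 2))
    Filter.atTop

/-- A family of vectors is minimal: each vector lies outside the closed linear span of
the remaining vectors. -/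
def MinimalSystem {ι : Type*} (f : ι → SpaceL2) : Prop :=
  ∀ i : ι,
    f i ∉ closure ((Submodule.span ℂ (f '' {j | j ≠ i}) : Submodule ℂ SpaceL2) : Set SpaceL2)

-- basic defs and easy lemmas
/-- our window: indicator of [0,1). -/
def gfun : ℝ → ℂ := Set.indicator (Set.Ico 0 1) 1

lemma gfun_memLp : MemLp gfun 2 (volume : Measure ℝ) := by
  apply memLp_indicator_const
  · exact measurableSet_Ico
  · right; simp

lemma gfun_eq_zero {x : ℝ} (hx : x ∉ Set.Ico (0:ℝ) 1) : gfun x = 0 :=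
  Set.indicator_of_notMem hx _

lemma norm_gabor_exp (μ t : ℝ) : ‖Complex.exp (2 * Real.pi * Complex.I * μ * t)‖ = 1 := by
  rw [Complex.norm_exp]
  have : (2 * Real.pi * Complex.I * μ * t).re = 0 := by simp
  rw [this, Real.exp_zero]

lemma gabor_aesm (p : ℝ × ℝ) :
    AEStronglyMeasurable (gaborFn gfun p) (volume : Measure ℝ) := by
  apply AEStronglyMeasurable.mul
  · apply Continuous.aestronglyMeasurable
    exact Complex.continuous_exp.comp (by continuity)
  · have : Measurable gfun := by
      apply Measurable.indicator measurable_const measurableSet_Ico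
    exact (this.comp (measurable_id.sub measurable_const)).aestronglyMeasurable

lemma gabor_memLp (p : ℝ × ℝ) : MemLp (gaborFn gfun p) 2 (volume : Measure ℝ) := by
  have hb : MemLp (Set.indicator (Set.Ico p.1 (p.1+1)) (fun _ => (1:ℝ))) 2 (volume : Measure ℝ) := by
    apply memLp_indicator_const
    · exact measurableSet_Ico
    · right; simp
  apply hb.mono (gabor_aesm p)
  apply Filter.Eventually.of_forall
  intro t
  rw [gaborFn]
  rw [norm_mul, norm_gabor_exp]
  by_cases h : t - p.1 ∈ Set.Ico (0:ℝ) 1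
  · have ht : t ∈ Set.Ico p.1 (p.1+1) := by
      simp only [Set.mem_Ico] at h ⊢; constructor <;> linarith [h.1, h.2]
    simp [gfun, Set.indicator_of_mem h, Set.indicator_of_mem ht]
  · simp [gfun_eq_zero h]
/-- the point set: clusters. cluster n (n ≥ 1) has times n²+j (j<n), freqs k/M (k < M n). -/
def lam (M : ℕ) : Set (ℝ × ℝ) :=
  {p | ∃ n j k : ℕ, j < n ∧ k < M * n ∧ p = (((n : ℝ)^2 + j : ℝ), (k : ℝ) / M)}

lemma nat_dist_ge_one {a b : ℕ} (h : a ≠ b) : (1:ℝ) ≤ |(a:ℝ) - b| := by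
  rcases lt_or_gt_of_ne h with h' | h'
  · have : (a:ℝ) + 1 ≤ b := by exact_mod_cast h'
    rw [abs_sub_comm, _root_.abs_of_nonneg (by linarith)]; linarith
  · have : (b:ℝ) + 1 ≤ a := by exact_mod_cast h'
    rw [_root_.abs_of_nonneg (by linarith)]; linarith

lemma time_inj {n j m i : ℕ} (hj : j < n) (hi : i < m) (h : n^2 + j = m^2 + i) :
    n = m ∧ j = i := by
  have hnm : n = m := by
    rcases lt_trichotomy n m with h' | h' | h'
    · exfalso; nlinarith
    · exact h'
    · exfalso; nlinarith
  subst hnm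
  exact ⟨rfl, by omega⟩

lemma time_inj_real {n j m i : ℕ} (hj : j < n) (hi : i < m)
    (h : ((n : ℝ)^2 + j : ℝ) = ((m : ℝ)^2 + i : ℝ)) : n = m ∧ j = i := by
  have : (n^2 + j : ℕ) = (m^2 + i : ℕ) := by exact_mod_cast h
  exact time_inj hj hi this

lemma lam_ud (M : ℕ) (hM : 1 ≤ M) : UniformlyDiscreteWith (1 / (2 * M)) (lam M) := by
  rintro x ⟨n, j, k, hj, hk, rfl⟩ y ⟨m, i, l, hi, hl, rfl⟩ hne
  have hM0 : (0:ℝ) < M := by exact_mod_cast hM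
  have hM1 : (1:ℝ) ≤ M := by exact_mod_cast hM
  by_cases ht : ((n : ℝ)^2 + j : ℝ) = ((m : ℝ)^2 + i : ℝ)
  · obtain ⟨rfl, rfl⟩ := time_inj_real hj hi ht
    have hkl : k ≠ l := by
      intro h; apply hne; rw [h]
    have key : (1:ℝ) / M ≤ dist ((k:ℝ)/M) ((l:ℝ)/M) := by
      rw [Real.dist_eq, div_sub_div_same, abs_div, _root_.abs_of_pos hM0]
      gcongr
      exact nat_dist_ge_one hkl
    calc (1:ℝ)/(2*M) < 1/M := by
          apply div_lt_div_of_pos_left one_pos hM0; linarith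
      _ ≤ dist ((k:ℝ)/M) ((l:ℝ)/M) := key
      _ ≤ _ := le_max_right _ _
  · have h1 : (1:ℝ) ≤ dist ((n : ℝ)^2 + j : ℝ) ((m : ℝ)^2 + i : ℝ) := by
      rw [Real.dist_eq]
      have hne2 : (n^2 + j : ℕ) ≠ (m^2 + i : ℕ) := by
        intro h; apply ht; exact_mod_cast h
      calc (1:ℝ) ≤ |((n^2+j : ℕ):ℝ) - ((m^2+i : ℕ):ℝ)| := nat_dist_ge_one hne2
        _ = |((n : ℝ)^2 + j) - ((m : ℝ)^2 + i)| := by push_cast; ring_nf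
    calc (1:ℝ)/(2*M) < 1 := by
          rw [div_lt_one (by linarith)]; linarith
      _ ≤ dist ((n : ℝ)^2 + j : ℝ) ((m : ℝ)^2 + i : ℝ) := h1
      _ ≤ _ := le_max_left _ _
lemma lam_inter_cube_finite (M : ℕ) (c : ℝ × ℝ) (R : ℝ) : (lam M ∩ cube c R).Finite := by
  set B := max (Nat.floor (c.1 + R)) (Nat.floor ((M:ℝ) * (c.2 + R))) + 1 with hB
  apply Set.Finite.subset
    (Set.Finite.image (f := fun q : ℕ×ℕ×ℕ => (((q.1:ℝ)^2 + q.2.1 : ℝ), (q.2.2:ℝ)/M))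
      ((Set.finite_Iio B).prod ((Set.finite_Iio B).prod (Set.finite_Iio B))))
  rintro p ⟨⟨n, j, k, hj, hk, rfl⟩, hc1, hc2⟩
  simp only [Set.mem_image, Set.mem_prod, Set.mem_Iio]
  have hn1 : (1:ℝ) ≤ n := by
    have : 1 ≤ n := by omega
    exact_mod_cast this
  have ht : ((n:ℝ)^2 + j) ≤ c.1 + R := by
    have := (abs_le.mp hc1).2; simp only at this; linarith
  have hnB : n < B := by
    have h1 : (n:ℝ) ≤ c.1 + R := by
      have : (n:ℝ) ≤ (n:ℝ)^2 + j := by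
        have : (0:ℝ) ≤ j := Nat.cast_nonneg j
        nlinarith
      linarith
    have := Nat.le_floor h1
    omega
  have hjB : j < B := by omega
  have hkB : k < B := by
    have hM0 : (0:ℝ) < M := by
      have : 1 ≤ M := by by_contra h; push_neg at h; interval_cases M <;> omega
      exact_mod_cast this
    have h2 : (k:ℝ)/M ≤ c.2 + R := by
      have := (abs_le.mp hc2).2; simp only at this; linarith
    have h3 : (k:ℝ) ≤ M * (c.2 + R) := by
      rw [div_le_iff₀ hM0] at h2; linarith [h2]
    have := Nat.le_floor h3
    omega
  exact ⟨(n, j, k), ⟨hnB, hjB, hkB⟩, rfl⟩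

lemma cluster_count (M : ℕ) (hM : 1 ≤ M) (n : ℕ) (hn : 1 ≤ n) :
    (M * n^2 : ℕ) ≤ (lam M ∩ cube (((n:ℝ)^2 + n, 0) : ℝ × ℝ) (n:ℝ)).ncard := by
  have hM0 : (0:ℝ) < M := by exact_mod_cast hM
  set Fn : Finset (ℝ × ℝ) := (Finset.range n ×ˢ Finset.range (M*n)).image
    (fun q : ℕ × ℕ => (((n:ℝ)^2 + q.1 : ℝ), (q.2:ℝ)/M)) with hFn
  have hcard : Fn.card = M * n^2 := by
    rw [hFn, Finset.card_image_of_injective _ ?_, Finset.card_product,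
      Finset.card_range, Finset.card_range]
    · ring
    · rintro ⟨j, k⟩ ⟨i, l⟩ h
      simp only [Prod.mk.injEq] at h
      obtain ⟨h1, h2⟩ := h
      have hj : (j:ℝ) = i := by linarith
      have hk : (k:ℝ) = l := by
        field_simp at h2; exact_mod_cast h2
      exact Prod.ext (by exact_mod_cast hj) (by exact_mod_cast hk)
  have hsub : (Fn : Set (ℝ × ℝ)) ⊆ lam M ∩ cube (((n:ℝ)^2 + n, 0) : ℝ × ℝ) (n:ℝ) := by
    intro p hp
    simp only [hFn, Finset.coe_image, Set.mem_image, Finset.mem_coe,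
      Finset.mem_product, Finset.mem_range] at hp
    obtain ⟨⟨j, k⟩, ⟨hj, hk⟩, rfl⟩ := hp
    constructor
    · exact ⟨n, j, k, hj, hk, rfl⟩
    · constructor
      · simp only
        rw [abs_le]
        have : (0:ℝ) ≤ j := Nat.cast_nonneg j
        have : (j:ℝ) ≤ n := by exact_mod_cast hj.le
        constructor <;> linarith
      · simp only
        rw [sub_zero, _root_.abs_of_nonneg (by positivity)]
        have : (k:ℝ) ≤ M * n := by exact_mod_cast hk.le
        rw [div_le_iff₀ hM0]
        nlinarith
  calc (M * n^2 : ℕ) = Fn.card := hcard.symm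
    _ = (Fn : Set (ℝ × ℝ)).ncard := (Set.ncard_coe_finset Fn).symm
    _ ≤ _ := Set.ncard_le_ncard hsub (lam_inter_cube_finite M _ _)

lemma lam_density (M : ℕ) (hM : 1 ≤ M) (d : ℝ) (hd : 0 ≤ d) (hMd : 4*(d+1) ≤ M) :
    ENNReal.ofReal d < upperDensity (lam M) := by
  have key : ∀ n : ℕ, 1 ≤ n → ENNReal.ofReal (d+1) ≤
      (⨆ c : ℝ × ℝ, (((lam M) ∩ cube c (n:ℝ)).ncard : ℝ≥0∞)) /
        ENNReal.ofReal ((2*(n:ℝ))^2) := by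
    intro n hn
    have hn1 : (1:ℝ) ≤ n := by exact_mod_cast hn
    rw [ENNReal.le_div_iff_mul_le (Or.inl (by positivity)) (Or.inl ENNReal.ofReal_ne_top)]
    have h1 : ENNReal.ofReal (d+1) * ENNReal.ofReal ((2*(n:ℝ))^2)
        = ENNReal.ofReal ((d+1) * (2*(n:ℝ))^2) := (ENNReal.ofReal_mul (by linarith)).symm
    rw [h1]
    have h2 : (d+1) * (2*(n:ℝ))^2 ≤ ((M * n^2 : ℕ) : ℝ) := by
      push_cast
      nlinarith
    calc ENNReal.ofReal ((d+1) * (2*(n:ℝ))^2) ≤ ENNReal.ofReal ((M * n^2 : ℕ) : ℝ) :=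
          ENNReal.ofReal_le_ofReal h2
      _ = ((M * n^2 : ℕ) : ℝ≥0∞) := ENNReal.ofReal_natCast _
      _ ≤ (((lam M ∩ cube (((n:ℝ)^2 + n, 0) : ℝ × ℝ) (n:ℝ)).ncard : ℕ) : ℝ≥0∞) := by
          exact_mod_cast Nat.cast_le.mpr (cluster_count M hM n hn)
      _ ≤ ⨆ c : ℝ × ℝ, (((lam M) ∩ cube c (n:ℝ)).ncard : ℝ≥0∞) :=
          le_iSup (fun c : ℝ × ℝ => (((lam M) ∩ cube c (n:ℝ)).ncard : ℝ≥0∞)) _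
  have hfreq : ∃ᶠ R in Filter.atTop, ENNReal.ofReal (d+1) ≤
      (⨆ c : ℝ × ℝ, (((lam M) ∩ cube c R).ncard : ℝ≥0∞)) / ENNReal.ofReal ((2*R)^2) := by
    rw [Filter.frequently_atTop]
    intro a
    refine ⟨(max 1 (Nat.ceil a) : ℕ), ?_, key _ (le_max_left _ _)⟩
    calc a ≤ (Nat.ceil a : ℝ) := Nat.le_ceil a
      _ ≤ ((max 1 (Nat.ceil a) : ℕ) : ℝ) := by exact_mod_cast Nat.cast_le.mpr (le_max_right _ _)
  have hlim : ENNReal.ofReal (d+1) ≤ upperDensity (lam M) :=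
    Filter.le_limsup_of_frequently_le hfreq
  calc ENNReal.ofReal d < ENNReal.ofReal (d+1) := by
        rw [ENNReal.ofReal_lt_ofReal_iff (by linarith)]; linarith
    _ ≤ _ := hlim
lemma lp_coeFn_sum {ι : Type*} [DecidableEq ι] (s : Finset ι) (f : ι → SpaceL2) :
    ⇑(∑ i ∈ s, f i) =ᵐ[volume] fun a => ∑ i ∈ s, f i a := by
  induction s using Finset.induction_on with
  | empty =>
      simp only [Finset.sum_empty]
      filter_upwards [MeasureTheory.Lp.coeFn_zero ℂ 2 (volume : Measure ℝ)] with a ha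
      simpa using ha
  | @insert i s his ih =>
      rw [Finset.sum_insert his]
      filter_upwards [MeasureTheory.Lp.coeFn_add (f i) (∑ j ∈ s, f j), ih] with a h1 h2
      simp only [Finset.sum_insert his, h1, Pi.add_apply, h2]

lemma gabor_support {p : ℝ × ℝ} {a : ℝ} (h : gaborFn gfun p a ≠ 0) :
    a ∈ Set.Ico p.1 (p.1 + 1) := by
  rw [gaborFn] at h
  have : gfun (a - p.1) ≠ 0 := fun h0 => h (by rw [h0, mul_zero])
  by_contra hc
  apply this
  apply gfun_eq_zero
  intro hmem
  apply hc
  simp only [Set.mem_Ico] at hmem ⊢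
  constructor <;> linarith [hmem.1, hmem.2]

/-- On the slot `[T, T+1)`, the gabor function with frequency `k/M` is the exponential. -/
lemma gabor_on_slot {T : ℝ} {a : ℝ} (ha : a ∈ Set.Ico T (T + 1)) (M : ℕ) (hM : 1 ≤ M) (k : ℕ) :
    gaborFn gfun ((T, (k:ℝ)/M) : ℝ × ℝ) a
      = Complex.exp (2 * Real.pi * Complex.I * a / M) ^ k := by
  rw [gaborFn]
  have h1 : a - T ∈ Set.Ico (0:ℝ) 1 := by
    simp only [Set.mem_Ico] at ha ⊢
    constructor <;> linarith [ha.1, ha.2]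
  have h2 : gfun (a - T) = 1 := by rw [gfun, Set.indicator_of_mem h1]; rfl
  simp only [h2, mul_one]
  rw [← Complex.exp_nat_mul]
  have hM0 : (M:ℂ) ≠ 0 := by
    exact_mod_cast Nat.cast_ne_zero.mpr (by omega)
  congr 1
  push_cast
  field_simp
lemma exp_inj_on_slot {T : ℝ} (M : ℕ) (hM : 1 ≤ M) :
    Set.InjOn (fun a : ℝ => Complex.exp (2 * Real.pi * Complex.I * a / M))
      (Set.Ico T (T + 1)) := by
  intro a ha b hb hab
  simp only at hab
  rw [Complex.exp_eq_exp_iff_exists_int] at hab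
  obtain ⟨m, hm⟩ := hab
  have hM0 : (M:ℂ) ≠ 0 := Nat.cast_ne_zero.mpr (by omega)
  have hpi : (2 * (Real.pi:ℂ) * Complex.I) ≠ 0 := by
    simp [Real.pi_ne_zero, Complex.I_ne_zero]
  have key : (a:ℂ) = b + m * M := by
    have h2 : (2 * (Real.pi:ℂ) * Complex.I) * a = (2 * (Real.pi:ℂ) * Complex.I) * (b + m * M) := by
      field_simp at hm
      ring_nf at hm ⊢
      linear_combination (2 * (Real.pi:ℂ) * Complex.I) * hm
    exact mul_left_cancel₀ hpi h2
  have keyR : a = b + m * M := by exact_mod_cast key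
  have hm0 : m = 0 := by
    by_contra hm0
    have h1 : (1:ℝ) ≤ |(m:ℝ) * M| := by
      have habs : |(m:ℝ) * M| = |(m:ℝ)| * (M:ℝ) := by
        rw [abs_mul, _root_.abs_of_nonneg (show (0:ℝ) ≤ (M:ℝ) by positivity)]
      have h1m : (1:ℝ) ≤ |(m:ℝ)| := by exact_mod_cast Int.one_le_abs (by exact_mod_cast hm0)
      have hM1 : (1:ℝ) ≤ (M:ℝ) := by exact_mod_cast hM
      rw [habs]; nlinarith
    have h2 : |a - b| < 1 := by
      simp only [Set.mem_Ico] at ha hb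
      rw [abs_lt]; constructor <;> linarith [ha.1, ha.2, hb.1, hb.2]
    rw [keyR] at h2
    simp only [add_sub_cancel_left] at h2
    linarith
  rw [hm0] at keyR
  simpa using keyR

lemma gabor_linIndep (M : ℕ) (hM : 1 ≤ M) (T : ℝ) (K : ℕ) :
    LinearIndependent ℂ (fun k : Fin K =>
      MemLp.toLp (gaborFn gfun ((T, ((k:ℕ):ℝ)/M) : ℝ × ℝ))
        (gabor_memLp ((T, ((k:ℕ):ℝ)/M) : ℝ × ℝ)) : Fin K → SpaceL2) := by
  rw [Fintype.linearIndependent_iff]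
  intro c hc k₀
  -- get the a.e. identity
  have hae : ∀ᵐ a ∂(volume : Measure ℝ),
      ∑ k : Fin K, c k * gaborFn gfun ((T, ((k:ℕ):ℝ)/M) : ℝ × ℝ) a = 0 := by
    have h1 : (⇑(∑ k : Fin K, c k • (MemLp.toLp _ (gabor_memLp ((T, ((k:ℕ):ℝ)/M) : ℝ × ℝ)))) : ℝ → ℂ)
        =ᵐ[volume] fun _ => (0:ℂ) := by
      rw [hc]
      exact MeasureTheory.Lp.coeFn_zero ℂ 2 volume
    have h2 := lp_coeFn_sum Finset.univ
      (fun k : Fin K => c k • (MemLp.toLp _ (gabor_memLp ((T, ((k:ℕ):ℝ)/M) : ℝ × ℝ))))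
    have h3 : ∀ᵐ a ∂(volume : Measure ℝ), ∀ k : Fin K,
        (⇑(c k • (MemLp.toLp (gaborFn gfun ((T, ((k:ℕ):ℝ)/M) : ℝ × ℝ))
          (gabor_memLp ((T, ((k:ℕ):ℝ)/M) : ℝ × ℝ)))) : ℝ → ℂ) a
          = c k * gaborFn gfun ((T, ((k:ℕ):ℝ)/M) : ℝ × ℝ) a := by
      rw [MeasureTheory.ae_all_iff]
      intro k
      filter_upwards [MeasureTheory.Lp.coeFn_smul (c k)
        (MemLp.toLp _ (gabor_memLp ((T, ((k:ℕ):ℝ)/M) : ℝ × ℝ))),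
        MemLp.coeFn_toLp (gabor_memLp ((T, ((k:ℕ):ℝ)/M) : ℝ × ℝ))] with a ha hb
      rw [ha]
      simp only [Pi.smul_apply, smul_eq_mul, hb]
    filter_upwards [h1, h2, h3] with a ha hsum hcomp
    rw [← Finset.sum_congr rfl (fun k _ => hcomp k), ← hsum, ha]
  -- the good set
  set z : ℝ → ℂ := fun a => Complex.exp (2 * Real.pi * Complex.I * a / M) with hz
  set P : Polynomial ℂ := ∑ k : Fin K, Polynomial.C (c k) * Polynomial.X ^ (k:ℕ) with hP
  set A : Set ℝ := {a ∈ Set.Ico T (T+1) |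
      ∑ k : Fin K, c k * gaborFn gfun ((T, ((k:ℕ):ℝ)/M) : ℝ × ℝ) a = 0} with hA
  have hroot : ∀ a ∈ A, P.IsRoot (z a) := by
    rintro a ⟨haI, haeq⟩
    have : ∀ k : Fin K, gaborFn gfun ((T, ((k:ℕ):ℝ)/M) : ℝ × ℝ) a = (z a)^(k:ℕ) :=
      fun k => gabor_on_slot haI M hM k
    rw [Polynomial.IsRoot, hP]
    rw [Polynomial.eval_finset_sum]
    simp only [Polynomial.eval_mul, Polynomial.eval_C, Polynomial.eval_pow, Polynomial.eval_X]
    rw [← haeq]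
    exact Finset.sum_congr rfl (fun k _ => by rw [this k])
  have hAinf : A.Infinite := by
    intro hfin
    have h0 : volume A = 0 := hfin.measure_zero volume
    have hsub : Set.Ico T (T+1) ⊆ A ∪ {a | ¬ (∑ k : Fin K,
        c k * gaborFn gfun ((T, ((k:ℕ):ℝ)/M) : ℝ × ℝ) a = 0)} := by
      intro a haI
      by_cases h : ∑ k : Fin K, c k * gaborFn gfun ((T, ((k:ℕ):ℝ)/M) : ℝ × ℝ) a = 0
      · exact Or.inl ⟨haI, h⟩
      · exact Or.inr h
    have hbad : volume {a | ¬ (∑ k : Fin K,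
        c k * gaborFn gfun ((T, ((k:ℕ):ℝ)/M) : ℝ × ℝ) a = 0)} = 0 := hae
    have : volume (Set.Ico T (T+1)) = 0 := by
      refine le_antisymm ?_ zero_le
      calc volume (Set.Ico T (T+1)) ≤ volume (A ∪ _) := measure_mono hsub
        _ ≤ volume A + _ := measure_union_le _ _
        _ = 0 := by rw [h0, hbad, add_zero]
    rw [Real.volume_Ico] at this
    simp at this
  have hPzero : P = 0 := by
    apply Polynomial.eq_zero_of_infinite_isRoot
    apply Set.Infinite.mono (s := z '' A)
    · rintro x ⟨a, ha, rfl⟩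
      exact hroot a ha
    · exact Set.Infinite.image (Set.InjOn.mono (fun a ha => ha.1) (exp_inj_on_slot M hM)) hAinf
  have : P.coeff (k₀:ℕ) = c k₀ := by
    rw [hP, Polynomial.finset_sum_coeff]
    rw [Finset.sum_eq_single k₀]
    · simp [Polynomial.coeff_C_mul, Polynomial.coeff_X_pow]
    · intro k _ hk
      simp only [Polynomial.coeff_C_mul, Polynomial.coeff_X_pow]
      rw [if_neg (fun h => hk (Fin.ext (by omega)))]
      simp
    · intro h
      exact absurd (Finset.mem_univ k₀) h
  rw [← this, hPzero]
  simp
lemma gabor_inner_zero (p q : ℝ × ℝ) (hpq : 1 ≤ |p.1 - q.1|) :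
    (inner ℂ (MemLp.toLp _ (gabor_memLp p)) (MemLp.toLp _ (gabor_memLp q)) : ℂ) = 0 := by
  rw [MeasureTheory.L2.inner_def]
  have hz : ∀ᵐ a ∂(volume : Measure ℝ),
      (inner ℂ ((MemLp.toLp _ (gabor_memLp p) : SpaceL2) a)
        ((MemLp.toLp _ (gabor_memLp q) : SpaceL2) a) : ℂ) = 0 := by
    filter_upwards [MemLp.coeFn_toLp (gabor_memLp p), MemLp.coeFn_toLp (gabor_memLp q)]
      with a h1 h2
    rw [h1, h2]
    by_cases hp : gaborFn gfun p a = 0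
    · simp [RCLike.inner_apply, hp]
    · have hq : gaborFn gfun q a = 0 := by
        have hap := gabor_support hp
        by_contra hcon
        have haq := gabor_support hcon
        simp only [Set.mem_Ico] at hap haq
        rcases abs_le.mp (le_refl |p.1 - q.1|) with _
        rcases le_or_gt (p.1) (q.1) with hle | hlt
        · have : p.1 + 1 ≤ q.1 := by
            rw [abs_sub_comm, _root_.abs_of_nonneg (by linarith)] at hpq; linarith
          linarith [hap.1, hap.2, haq.1, haq.2]
        · have : q.1 + 1 ≤ p.1 := by
            rw [_root_.abs_of_nonneg (by linarith)] at hpq; linarith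
          linarith [hap.1, hap.2, haq.1, haq.2]
      simp [RCLike.inner_apply, hq]
  rw [integral_congr_ae hz, integral_zero]
/-- **Theorem 2 (negative part).** For every `d > 0` there are `g ∈ L²(ℝ)` and a uniformly
discrete `Λ ⊂ ℝ²` with `D⁺(Λ) > d` such that the Gabor system `G(g,Λ)` is minimal. -/
theorem exists_minimal_gabor_with_large_upperDensity (d : ℝ) (hd : 0 < d) :
    ∃ (g : ℝ → ℂ), MemLp g 2 (volume : Measure ℝ) ∧
    ∃ (Λ : Set (ℝ × ℝ)), UniformlyDiscrete Λ ∧ ENNReal.ofReal d < upperDensity Λ ∧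
    ∃ F : Λ → SpaceL2,
      (∀ p : Λ, (F p : ℝ → ℂ) =ᵐ[volume] gaborFn g (p : ℝ × ℝ)) ∧ MinimalSystem F := by
  set M : ℕ := 4 * (Nat.ceil d + 1) with hMdef
  have hM : 1 ≤ M := by omega
  have hMd : 4 * (d + 1) ≤ (M : ℝ) := by
    have h1 : d ≤ (Nat.ceil d : ℝ) := Nat.le_ceil d
    have h2 : ((M : ℕ) : ℝ) = 4 * ((Nat.ceil d : ℝ) + 1) := by rw [hMdef]; push_cast; ring
    rw [h2]; linarith
  have hM0 : (0:ℝ) < M := by exact_mod_cast hM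
  refine ⟨gfun, gfun_memLp, lam M,
    ⟨1/(2*M), by positivity, lam_ud M hM⟩,
    lam_density M hM d hd.le hMd, ?_⟩
  set F : (lam M) → SpaceL2 :=
    fun p => MemLp.toLp (gaborFn gfun (p : ℝ × ℝ)) (gabor_memLp (p : ℝ × ℝ)) with hF
  refine ⟨F, fun p => MemLp.coeFn_toLp _, ?_⟩
  intro p₀
  obtain ⟨n₀, j₀, k₀, hj₀, hk₀, hp₀⟩ := p₀.2
  set T : ℝ := ((n₀:ℝ)^2 + j₀) with hT
  set K : ℕ := M * n₀ with hKdef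
  set V : Fin K → SpaceL2 := fun k =>
    MemLp.toLp (gaborFn gfun ((T, ((k:ℕ):ℝ)/M) : ℝ × ℝ))
      (gabor_memLp ((T, ((k:ℕ):ℝ)/M) : ℝ × ℝ)) with hV
  have hind : LinearIndependent ℂ V := gabor_linIndep M hM T K
  set k₀' : Fin K := ⟨k₀, hk₀⟩ with hk₀'
  set W : Submodule ℂ SpaceL2 := Submodule.span ℂ (V '' {k | k ≠ k₀'}) with hW
  haveI : FiniteDimensional ℂ W :=
    FiniteDimensional.span_of_finite ℂ ((Set.toFinite _).image V)
  haveI : CompleteSpace W := FiniteDimensional.complete ℂ W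
  set h : SpaceL2 := V k₀' - ((W.orthogonalProjectionOnto (V k₀') : W) : SpaceL2) with hh
  have hperp : h ∈ Wᗮ := Submodule.sub_starProjection_mem_orthogonal (K := W) _
  have hnz : h ≠ 0 := by
    intro h0
    have hVW : V k₀' ∈ W := by
      have : V k₀' = ((W.orthogonalProjectionOnto (V k₀') : W) : SpaceL2) := by
        rw [← sub_eq_zero]; exact h0
      rw [this]; exact ((W.orthogonalProjectionOnto (V k₀') : W)).2
    exact (hind.notMem_span_image (by simp : k₀' ∉ {k | k ≠ k₀'})) hVW
  have hFp₀ : F p₀ = V k₀' := by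
    simp only [hF, hV]
    have : (p₀ : ℝ × ℝ) = ((T, ((k₀' : ℕ):ℝ)/M) : ℝ × ℝ) := hp₀
    rw [this]
  set φ : SpaceL2 →L[ℂ] ℂ := innerSL ℂ h with hφ
  have claim0 : ∀ q : (lam M), q ≠ p₀ → φ (F q) = 0 := by
    intro q hq
    obtain ⟨n, j, k, hj, hk, hqe⟩ := q.2
    by_cases hsame : ((n:ℝ)^2 + j) = T
    · obtain ⟨hnn, hjj⟩ := time_inj_real hj hj₀ hsame
      subst hnn; subst hjj
      have hkK : k < K := by rw [hKdef]; exact hk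
      have hkne : (⟨k, hkK⟩ : Fin K) ≠ k₀' := by
        intro he
        apply hq
        apply Subtype.ext
        rw [hqe, hp₀]
        have : k = k₀ := by
          have := congrArg Fin.val he
          simpa using this
        rw [this]
      have hFq : F q = V ⟨k, hkK⟩ := by
        simp only [hF, hV]
        have : (q : ℝ × ℝ) = ((T, (((⟨k, hkK⟩ : Fin K) : ℕ):ℝ)/M) : ℝ × ℝ) := hqe
        rw [this]
      rw [hFq, hφ]
      have hmemW : V ⟨k, hkK⟩ ∈ W :=
        Submodule.subset_span ⟨⟨k, hkK⟩, hkne, rfl⟩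
      have h0 : (inner ℂ (V ⟨k, hkK⟩) h : ℂ) = 0 :=
        (Submodule.mem_orthogonal W h).mp hperp _ hmemW
      simp only [innerSL_apply_apply]
      rw [← inner_conj_symm, h0, map_zero]
    · -- different time slot
      have hdist : (1:ℝ) ≤ |((q : ℝ × ℝ)).1 - T| := by
        rw [hqe]
        have hne : (n^2 + j : ℕ) ≠ (n₀^2 + j₀ : ℕ) := by
          intro hcon; apply hsame
          rw [hT]
          have : ((n^2 + j : ℕ) : ℝ) = ((n₀^2 + j₀ : ℕ) : ℝ) := by exact_mod_cast hcon
          push_cast at this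
          push_cast
          linarith
        have := nat_dist_ge_one hne
        calc (1:ℝ) ≤ |((n^2+j : ℕ):ℝ) - ((n₀^2+j₀ : ℕ):ℝ)| := this
          _ = |((n:ℝ)^2 + j) - T| := by rw [hT]; push_cast; ring_nf
      have hker : ∀ k' : Fin K, (inner ℂ (F q) (V k') : ℂ) = 0 := by
        intro k'
        simp only [hF, hV]
        apply gabor_inner_zero
        simpa using hdist
      have hmemspan : h ∈ Submodule.span ℂ (Set.range V) := by
        apply sub_mem
        · exact Submodule.subset_span (Set.mem_range_self _)
        · have : W ≤ Submodule.span ℂ (Set.range V) :=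
            Submodule.span_mono (Set.image_subset_range V _)
          exact this ((W.orthogonalProjectionOnto (V k₀') : W)).2
      have hle : Submodule.span ℂ (Set.range V) ≤ (innerSL ℂ (F q)).ker := by
        rw [Submodule.span_le]
        rintro x ⟨k', rfl⟩
        simp only [SetLike.mem_coe, LinearMap.mem_ker]
        simpa using hker k'
      have : (inner ℂ (F q) h : ℂ) = 0 := by
        have := hle hmemspan
        simpa using this
      rw [hφ]
      simp only [innerSL_apply_apply]
      rw [← inner_conj_symm, this, map_zero]
  intro hcl
  have hsub : ((Submodule.span ℂ (F '' {j | j ≠ p₀}) : Submodule ℂ SpaceL2) : Set SpaceL2)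
      ⊆ (φ.ker : Set SpaceL2) := by
    have : Submodule.span ℂ (F '' {j | j ≠ p₀}) ≤ φ.ker := by
      rw [Submodule.span_le]
      rintro x ⟨q, hq, rfl⟩
      simp only [SetLike.mem_coe, LinearMap.mem_ker]
      exact claim0 q hq
    exact this
  have hker : F p₀ ∈ (φ.ker : Set SpaceL2) :=
    closure_minimal hsub (ContinuousLinearMap.isClosed_ker φ) hcl
  have hval : φ (F p₀) = (inner ℂ h h : ℂ) := by
    rw [hFp₀, hφ]
    simp only [innerSL_apply_apply]
    have hdecomp : V k₀' = h + ((W.orthogonalProjectionOnto (V k₀') : W) : SpaceL2) := by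
      rw [hh]; abel
    rw [hdecomp, inner_add_right]
    have : (inner ℂ h (((W.orthogonalProjectionOnto (V k₀') : W) : SpaceL2)) : ℂ) = 0 := by
      rw [← inner_conj_symm]
      rw [(Submodule.mem_orthogonal W h).mp hperp _ ((W.orthogonalProjectionOnto (V k₀') : W)).2]
      rw [map_zero]
    rw [this, add_zero]
  have : (inner ℂ h h : ℂ) = 0 := by
    rw [← hval]
    simpa using hker
  exact hnz (inner_self_eq_zero.mp this)
end
end

section
/- Let G ∈ L²(ℝ²) and for R > 1 define I_G(R) = ∫_{Q_0(R)} ∫_{Q_0^c(R+1/4)} |G(t−x, s−y)|² dt ds dx dy. Then I_G(R)/R² → 0 as R → ∞. -/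
open MeasureTheory Complex Filter
open scoped ENNReal

noncomputable section

/-- `I_G(R) = ∫_{Q_0(R)} ∫_{Q_0^c(R+1/4)} |G(t-x, s-y)|² dt ds dx dy`. -/
def IG (G : ℝ × ℝ → ℂ) (R : ℝ) : ℝ :=
  ∫ p in cube 0 R, (∫ q in (cube 0 (R + 1 / 4))ᶜ, ‖G (q.1 - p.1, q.2 - p.2)‖ ^ 2)

lemma cube_eq_prod (r : ℝ) : cube 0 r = Set.Icc (-r) r ×ˢ Set.Icc (-r) r := by
  ext p
  simp only [cube, Set.mem_setOf_eq, Set.mem_prod, Set.mem_Icc, abs_le, Prod.fst_zero,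
    Prod.snd_zero, sub_zero]

lemma measurableSet_cube (r : ℝ) : MeasurableSet (cube 0 r) := by
  rw [cube_eq_prod]; exact measurableSet_Icc.prod measurableSet_Icc

lemma volume_cube (r : ℝ) :
    volume (cube 0 r) = ENNReal.ofReal (2 * r) * ENNReal.ofReal (2 * r) := by
  rw [cube_eq_prod, Measure.volume_eq_prod, Measure.prod_prod, Real.volume_Icc]
  ring_nf

lemma volume_cube_lt_top (r : ℝ) : volume (cube 0 r) < ⊤ := by
  rw [volume_cube]
  exact ENNReal.mul_lt_top ENNReal.ofReal_lt_top ENNReal.ofReal_lt_top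

lemma volume_cube_toReal (r : ℝ) (hr : 0 ≤ r) :
    (volume (cube 0 r)).toReal = (2 * r) * (2 * r) := by
  rw [volume_cube, ENNReal.toReal_mul, ENNReal.toReal_ofReal (by linarith)]

lemma cube_mono {r r' : ℝ} (h : r ≤ r') : cube 0 r ⊆ cube 0 r' := by
  intro p hp; exact ⟨hp.1.trans h, hp.2.trans h⟩

/-- **Lemma 8.** For `G ∈ L²(ℝ²)`, `I_G(R)/R² → 0` as `R → ∞`. -/
theorem IG_div_sq_tendsto_zero
    (G : ℝ × ℝ → ℂ) (hG : MemLp G 2 (volume : Measure (ℝ × ℝ))) :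
    Tendsto (fun R : ℝ => IG G R / R ^ 2) atTop (nhds 0) := by
  classical
  set F : ℝ × ℝ → ℝ := fun u => ‖G u‖ ^ 2 with hFdef
  have hFnonneg : ∀ u, 0 ≤ F u := fun u => by positivity
  have hFint : Integrable F (volume : Measure (ℝ × ℝ)) := by
    have h := hG.integrable_norm_rpow (by norm_num) (by norm_num)
    have : (fun x => ‖G x‖ ^ ((2:ℝ≥0∞).toReal)) = F := by
      funext x
      rw [hFdef]
      simp only [ENNReal.toReal_ofNat]
      rw [show ((2:ℝ)) = ((2:ℕ):ℝ) by norm_num, Real.rpow_natCast]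
    rwa [this] at h
  obtain ⟨g, hgmeas, hGg⟩ := hG.1
  set F' : ℝ × ℝ → ℝ := fun u => ‖g u‖ ^ 2 with hF'def
  have hF'meas : Measurable F' := (hgmeas.measurable.norm).pow_const 2
  have hFF' : F =ᵐ[volume] F' := hGg.mono fun x hx => by simp [hFdef, hF'def, hx]
  -- inner integral as a function
  set inner : ℝ → (ℝ × ℝ) → ℝ := fun R p => ∫ q in (cube 0 (R + 1 / 4))ᶜ, F (q - p) with hinnerdef
  have hIG : ∀ R, IG G R = ∫ p in cube 0 R, inner R p := by
    intro R; rfl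
  -- inner equals the version with the measurable representative
  have hshift : ∀ (p : ℝ × ℝ) (R : ℝ),
      inner R p = ∫ q in (cube 0 (R + 1 / 4))ᶜ, F' (q - p) := by
    intro p R
    refine integral_congr_ae (ae_restrict_of_ae ?_)
    have h1 := (measurePreserving_sub_right (volume : Measure (ℝ × ℝ)) p).quasiMeasurePreserving.ae_eq_comp hFF'
    exact h1
  have hinner_nonneg : ∀ R p, 0 ≤ inner R p :=
    fun R p => integral_nonneg fun q => hFnonneg _
  -- measurability of the inner integral in p
  have hinner_meas : ∀ R : ℝ, StronglyMeasurable (inner R) := by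
    intro R
    have hS : MeasurableSet ((cube 0 (R + 1 / 4))ᶜ) := (measurableSet_cube _).compl
    have hf : StronglyMeasurable (fun z : (ℝ × ℝ) × (ℝ × ℝ) =>
        Set.indicator (Set.univ ×ˢ (cube 0 (R + 1 / 4))ᶜ) (fun z => F' (z.2 - z.1)) z) := by
      refine (Measurable.indicator ?_ (MeasurableSet.univ.prod hS)).stronglyMeasurable
      exact hF'meas.comp (measurable_snd.sub measurable_fst)
    have h2 := hf.integral_prod_right' (ν := (volume : Measure (ℝ × ℝ)))
    have : (fun p : ℝ × ℝ => ∫ q, Set.indicator (Set.univ ×ˢ (cube 0 (R + 1 / 4))ᶜ)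
        (fun z => F' (z.2 - z.1)) (p, q)) = inner R := by
      funext p
      rw [hshift p R, ← integral_indicator hS]
      congr 1
      funext q
      by_cases hq : q ∈ (cube 0 (R + 1 / 4))ᶜ <;>
        simp [Set.indicator_apply, hq]
    rwa [this] at h2
  -- tail function
  set eps : ℝ → ℝ := fun m => ∫ u in (cube 0 m)ᶜ, F u with hepsdef
  have heps_nonneg : ∀ m, 0 ≤ eps m := fun m => integral_nonneg fun u => hFnonneg _
  -- key pointwise bound
  have hinnerBound : ∀ (R m : ℝ) (p : ℝ × ℝ), 0 ≤ m → p ∈ cube 0 (R - m) →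
      inner R p ≤ eps m := by
    intro R m p hm hp
    have hsub : ∀ q ∈ (cube 0 (R + 1 / 4))ᶜ, q - p ∈ (cube 0 m)ᶜ := by
      intro q hq
      simp only [cube, Set.mem_compl_iff, Set.mem_setOf_eq, sub_zero, not_and_or, not_le,
        Prod.fst_sub, Prod.snd_sub, Prod.fst_zero, Prod.snd_zero] at hq hp ⊢
      obtain ⟨hp1, hp2⟩ := hp
      rcases hq with h | h
      · left
        have h1 : |q.1| - |p.1| ≤ |q.1 - p.1| := abs_sub_abs_le_abs_sub _ _
        linarith
      · right
        have h1 : |q.2| - |p.2| ≤ |q.2 - p.2| := abs_sub_abs_le_abs_sub _ _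
        linarith
    have hIind : Integrable (fun q : ℝ × ℝ => Set.indicator (cube 0 m)ᶜ F (q - p)) volume :=
      (hFint.indicator (measurableSet_cube m).compl).comp_sub_right p
    calc inner R p
        = ∫ q in (cube 0 (R + 1 / 4))ᶜ, Set.indicator (cube 0 m)ᶜ F (q - p) := by
          refine setIntegral_congr_fun (measurableSet_cube _).compl fun q hq => ?_
          rw [Set.indicator_of_mem (hsub q hq)]
      _ ≤ ∫ q, Set.indicator (cube 0 m)ᶜ F (q - p) := by
          refine setIntegral_le_integral hIind (Filter.Eventually.of_forall fun q => ?_)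
          exact Set.indicator_nonneg (fun u _ => hFnonneg u) _
      _ = ∫ u, Set.indicator (cube 0 m)ᶜ F u := integral_sub_right_eq_self _ p
      _ = eps m := integral_indicator (measurableSet_cube m).compl
  -- tail goes to zero
  have htail : ∀ δ : ℝ, 0 < δ → ∃ m : ℝ, 0 ≤ m ∧ eps m < δ := by
    intro δ hδ
    have hmono : Monotone fun n : ℕ => cube 0 (n : ℝ) := fun a b hab =>
      cube_mono (by exact_mod_cast hab)
    have hunion : (⋃ n : ℕ, cube 0 (n : ℝ)) = Set.univ := by
      ext p
      simp only [Set.mem_iUnion, Set.mem_univ, iff_true]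
      obtain ⟨n, hn⟩ := exists_nat_ge (max |p.1| |p.2|)
      exact ⟨n, ⟨by simpa using (le_max_left _ _).trans hn,
        by simpa using (le_max_right _ _).trans hn⟩⟩
    have hlim := tendsto_setIntegral_of_monotone (fun n : ℕ => measurableSet_cube (n : ℝ))
      hmono (by rw [hunion]; exact hFint.integrableOn)
    rw [hunion] at hlim
    simp only [Measure.restrict_univ] at hlim
    have hlim2 : Tendsto (fun n : ℕ => eps (n : ℝ)) atTop (nhds 0) := by
      have heq : ∀ n : ℕ, eps (n : ℝ) = (∫ u, F u) - ∫ u in cube 0 (n : ℝ), F u := by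
        intro n
        have := integral_add_compl (measurableSet_cube (n : ℝ)) hFint
        rw [hepsdef]; linarith [this]
      simp only [heq]
      have := hlim.const_sub (∫ u, F u)
      simpa using this
    have hev : ∀ᶠ n : ℕ in atTop, eps (n : ℝ) < δ := hlim2.eventually (eventually_lt_nhds hδ)
    obtain ⟨n, hn⟩ := hev.exists
    exact ⟨(n : ℝ), Nat.cast_nonneg n, hn⟩
  -- integrability of the inner function on cubes
  have hinner_intOn : ∀ R : ℝ, IntegrableOn (inner R) (cube 0 R) volume := by
    intro R
    refine Measure.integrableOn_of_bounded (M := eps 0) (volume_cube_lt_top R).ne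
      (hinner_meas R).aestronglyMeasurable
      (ae_restrict_of_forall_mem (measurableSet_cube R) fun p hp => ?_)
    rw [Real.norm_eq_abs, _root_.abs_of_nonneg (hinner_nonneg R p)]
    exact hinnerBound R 0 p le_rfl (by simpa using hp)
  have hIG_nonneg : ∀ R, 0 ≤ IG G R := by
    intro R
    rw [hIG R]
    exact integral_nonneg fun p => hinner_nonneg R p
  -- final limit argument
  rw [Metric.tendsto_atTop]
  intro δ hδ
  obtain ⟨m, hm0, hεm⟩ := htail (δ / 8) (by linarith)
  set C := eps 0 with hCdef
  have hC0 : 0 ≤ C := heps_nonneg 0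
  refine ⟨max (m + 1) (16 * m * C / δ + 1), fun R hR => ?_⟩
  have hRm : m + 1 ≤ R := le_trans (le_max_left _ _) hR
  have hRC : 16 * m * C / δ + 1 ≤ R := le_trans (le_max_right _ _) hR
  have hR0 : 0 < R := by linarith
  have hRm0 : 0 ≤ R - m := by linarith
  have hsubc : cube 0 (R - m) ⊆ cube 0 R := cube_mono (by linarith)
  -- split the integral
  have hsplit : IG G R = (∫ p in cube 0 (R - m), inner R p)
      + ∫ p in cube 0 R \ cube 0 (R - m), inner R p := by
    rw [hIG R, ← integral_inter_add_diff (measurableSet_cube (R - m)) (hinner_intOn R),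
      Set.inter_eq_self_of_subset_right hsubc]
  -- bound the first term
  have hT1 : (∫ p in cube 0 (R - m), inner R p) ≤ eps m * ((2 * R) * (2 * R)) := by
    have hb := norm_setIntegral_le_of_norm_le_const (μ := volume) (f := inner R)
      (s := cube 0 (R - m)) (C := eps m) (volume_cube_lt_top _)
      (fun p hp => by
        rw [Real.norm_eq_abs, _root_.abs_of_nonneg (hinner_nonneg R p)]
        exact hinnerBound R m p hm0 hp)
    rw [Real.norm_eq_abs] at hb
    calc (∫ p in cube 0 (R - m), inner R p) ≤ |∫ p in cube 0 (R - m), inner R p| := le_abs_self _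
      _ ≤ eps m * (volume (cube 0 (R - m))).toReal := hb
      _ = eps m * ((2 * (R - m)) * (2 * (R - m))) := by rw [volume_cube_toReal _ hRm0]
      _ ≤ eps m * ((2 * R) * (2 * R)) := by
          refine mul_le_mul_of_nonneg_left ?_ (heps_nonneg m)
          nlinarith
  -- bound the second term
  have hdiffvol : (volume (cube 0 R \ cube 0 (R - m))).toReal ≤ 8 * R * m := by
    rw [measure_diff hsubc (measurableSet_cube (R - m)).nullMeasurableSet
      (volume_cube_lt_top _).ne,
      ENNReal.toReal_sub_of_le (measure_mono hsubc) (volume_cube_lt_top _).ne,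
      volume_cube_toReal R hR0.le, volume_cube_toReal _ hRm0]
    nlinarith
  have hT2 : (∫ p in cube 0 R \ cube 0 (R - m), inner R p) ≤ C * (8 * R * m) := by
    have hb := norm_setIntegral_le_of_norm_le_const (μ := volume) (f := inner R)
      (s := cube 0 R \ cube 0 (R - m)) (C := C)
      (lt_of_le_of_lt (measure_mono Set.diff_subset) (volume_cube_lt_top R))
      (fun p hp => by
        rw [Real.norm_eq_abs, _root_.abs_of_nonneg (hinner_nonneg R p)]
        exact hinnerBound R 0 p le_rfl (by simpa using hp.1))
    rw [Real.norm_eq_abs] at hb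
    calc (∫ p in cube 0 R \ cube 0 (R - m), inner R p)
        ≤ |∫ p in cube 0 R \ cube 0 (R - m), inner R p| := le_abs_self _
      _ ≤ C * (volume (cube 0 R \ cube 0 (R - m))).toReal := hb
      _ ≤ C * (8 * R * m) := mul_le_mul_of_nonneg_left hdiffvol hC0
  -- put things together
  have hIGle : IG G R ≤ δ / 8 * ((2 * R) * (2 * R)) + C * (8 * R * m) := by
    rw [hsplit]
    have h1 : eps m * ((2 * R) * (2 * R)) ≤ δ / 8 * ((2 * R) * (2 * R)) := by
      refine mul_le_mul_of_nonneg_right hεm.le (by nlinarith)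
    linarith
  have hkey : 16 * m * C < δ * R := by
    have h1 : 16 * m * C / δ < R := by linarith
    calc 16 * m * C = 16 * m * C / δ * δ := by field_simp
      _ < R * δ := by
          refine mul_lt_mul_of_pos_right h1 hδ
      _ = δ * R := mul_comm _ _
  have h8 : 8 * m * C / R < δ / 2 := by
    rw [div_lt_iff₀ hR0]
    nlinarith
  have hfrac : IG G R / R ^ 2 ≤ (δ / 8 * ((2 * R) * (2 * R)) + C * (8 * R * m)) / R ^ 2 :=
    div_le_div_of_nonneg_right hIGle (by positivity)
  have heq2 : (δ / 8 * ((2 * R) * (2 * R)) + C * (8 * R * m)) / R ^ 2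
      = δ / 2 + 8 * m * C / R := by
    field_simp
    ring
  rw [Real.dist_eq, sub_zero, _root_.abs_of_nonneg (div_nonneg (hIG_nonneg R) (by positivity))]
  rw [heq2] at hfrac
  linarith
end
end
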